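/- Let m₀, m₁ be positive rational numbers and let E be the elliptic curve over ℚ given by the Weierstrass equation y² = x(x − m₀m₁)(x + m₀ + m₁ + 1). Let F be the set consisting of the point at infinity O together with the seven affine points (0,0), (m₀m₁, 0), (−m₀−m₁−1, 0), (−m₁, −m₁(m₀+1)), (−m₀, m₀(m₁+1)), (m₀(m₀+m₁+1), −m₀(m₀+1)(m₀+m₁+1)), and (m₁(m₀+m₁+1), m₁(m₁+1)(m₀+m₁+1)). Then all these points lie on E(ℚ), F has exactly 8 elements, and F is a subgroup of the group E(ℚ) if and only if m₀ = m₁; in that case F is isomorphic to ℤ/2ℤ × ℤ/4ℤ. -/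

import Mathlib

/-- The elliptic curve `y² = x * (x - m₀ * m₁) * (x + m₀ + m₁ + 1)` over `ℚ`. -/
def Ecurve (m₀ m₁ : ℚ) : WeierstrassCurve.Affine ℚ :=
  { a₁ := 0
    a₂ := m₀ + m₁ + 1 - m₀ * m₁
    a₃ := 0
    a₄ := -(m₀ * m₁) * (m₀ + m₁ + 1)
    a₆ := 0 }

/-- The coordinates of the seven affine trivial points. -/
def trivCoords (m₀ m₁ : ℚ) : List (ℚ × ℚ) :=
  [(0, 0), (m₀ * m₁, 0), (-m₀ - m₁ - 1, 0), (-m₁, -m₁ * (m₀ + 1)), (-m₀, m₀ * (m₁ + 1)),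
    (m₀ * (m₀ + m₁ + 1), -m₀ * (m₀ + 1) * (m₀ + m₁ + 1)),
    (m₁ * (m₀ + m₁ + 1), m₁ * (m₁ + 1) * (m₀ + m₁ + 1))]

/-- The set `F` of the eight trivial points: the point at infinity together with the seven
affine trivial points. -/
def Fset (m₀ m₁ : ℚ) : Set (Ecurve m₀ m₁).Point :=
  {P | P = 0 ∨ ∃ x y : ℚ, ∃ h : (Ecurve m₀ m₁).Nonsingular x y,
    P = WeierstrassCurve.Affine.Point.some _ _ h ∧ (x, y) ∈ trivCoords m₀ m₁}

namespace TrivialPoints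

open WeierstrassCurve.Affine WeierstrassCurve.Affine.Point

variable {m₀ m₁ : ℚ}

@[simp] lemma Ea₁ : (Ecurve m₀ m₁).a₁ = 0 := rfl
@[simp] lemma Ea₂ : (Ecurve m₀ m₁).a₂ = m₀ + m₁ + 1 - m₀ * m₁ := rfl
@[simp] lemma Ea₃ : (Ecurve m₀ m₁).a₃ = 0 := rfl
@[simp] lemma Ea₄ : (Ecurve m₀ m₁).a₄ = -(m₀ * m₁) * (m₀ + m₁ + 1) := rfl
@[simp] lemma Ea₆ : (Ecurve m₀ m₁).a₆ = 0 := rfl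

lemma negY_eq (x y : ℚ) : (Ecurve m₀ m₁).negY x y = -y := by
  simp [WeierstrassCurve.Affine.negY]

lemma ns_aux {x y : ℚ}
    (heq : y ^ 2 = x ^ 3 + (m₀ + m₁ + 1 - m₀ * m₁) * x ^ 2 + -(m₀ * m₁) * (m₀ + m₁ + 1) * x)
    (hne : 3 * x ^ 2 + 2 * (m₀ + m₁ + 1 - m₀ * m₁) * x + -(m₀ * m₁) * (m₀ + m₁ + 1) ≠ 0 ∨
      y ≠ 0) : (Ecurve m₀ m₁).Nonsingular x y := by
  rw [WeierstrassCurve.Affine.nonsingular_iff', WeierstrassCurve.Affine.equation_iff']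
  simp only [Ea₁, Ea₂, Ea₃, Ea₄, Ea₆]
  constructor
  · linear_combination heq
  · rcases hne with h | h
    · exact Or.inl (by intro hc; apply h; linear_combination -hc)
    · exact Or.inr (by intro hc; apply h; linear_combination hc / 2)

section

variable (h₀ : 0 < m₀) (h₁ : 0 < m₁)
include h₀ h₁

lemma aux_facts : (0:ℚ) < m₀ * m₁ ∧ (0:ℚ) < m₀ + m₁ + 1 ∧ (0:ℚ) < m₀ * m₁ + m₀ + m₁ + 1 := by
  have hP : (0:ℚ) < m₀ * m₁ := mul_pos h₀ h₁
  exact ⟨hP, by linarith, by linarith⟩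

lemma nsP1 : (Ecurve m₀ m₁).Nonsingular 0 0 :=
  ns_aux (by ring) (Or.inl (ne_of_lt (by
    obtain ⟨hP, hS, hPS⟩ := aux_facts h₀ h₁; nlinarith [mul_pos hP hS])))

lemma nsP2 : (Ecurve m₀ m₁).Nonsingular (m₀ * m₁) 0 :=
  ns_aux (by ring) (Or.inl (ne_of_gt (by
    obtain ⟨hP, hS, hPS⟩ := aux_facts h₀ h₁; nlinarith [mul_pos hP hPS])))

lemma nsP3 : (Ecurve m₀ m₁).Nonsingular (-m₀ - m₁ - 1) 0 :=
  ns_aux (by ring) (Or.inl (ne_of_gt (by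
    obtain ⟨hP, hS, hPS⟩ := aux_facts h₀ h₁; nlinarith [mul_pos hS hPS])))

lemma nsP4 : (Ecurve m₀ m₁).Nonsingular (-m₁) (-m₁ * (m₀ + 1)) :=
  ns_aux (by ring) (Or.inr (ne_of_lt (by nlinarith)))

lemma nsP5 : (Ecurve m₀ m₁).Nonsingular (-m₀) (m₀ * (m₁ + 1)) :=
  ns_aux (by ring) (Or.inr (ne_of_gt (by nlinarith)))

lemma nsP6 : (Ecurve m₀ m₁).Nonsingular (m₀ * (m₀ + m₁ + 1))
    (-m₀ * (m₀ + 1) * (m₀ + m₁ + 1)) :=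
  ns_aux (by ring) (Or.inr (ne_of_lt (by
    have h2 : (0:ℚ) < m₀ + 1 := by linarith
    have h3 : (0:ℚ) < m₀ + m₁ + 1 := by linarith
    nlinarith [mul_pos (mul_pos h₀ h2) h3])))

lemma nsP7 : (Ecurve m₀ m₁).Nonsingular (m₁ * (m₀ + m₁ + 1))
    (m₁ * (m₁ + 1) * (m₀ + m₁ + 1)) :=
  ns_aux (by ring) (Or.inr (ne_of_gt (by
    have h2 : (0:ℚ) < m₁ + 1 := by linarith
    have h3 : (0:ℚ) < m₀ + m₁ + 1 := by linarith
    nlinarith [mul_pos (mul_pos h₁ h2) h3])))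

end

lemma ns_all (h₀ : 0 < m₀) (h₁ : 0 < m₁) :
    ∀ p ∈ trivCoords m₀ m₁, (Ecurve m₀ m₁).Nonsingular p.1 p.2 := by
  intro p hp
  simp only [trivCoords, List.mem_cons, List.not_mem_nil, or_false] at hp
  rcases hp with rfl | rfl | rfl | rfl | rfl | rfl | rfl
  exacts [nsP1 h₀ h₁, nsP2 h₀ h₁, nsP3 h₀ h₁, nsP4 h₀ h₁, nsP5 h₀ h₁, nsP6 h₀ h₁, nsP7 h₀ h₁]

lemma some_eq {x₁ y₁ x₂ y₂ : ℚ} {h₁ : (Ecurve m₀ m₁).Nonsingular x₁ y₁}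
    {h₂ : (Ecurve m₀ m₁).Nonsingular x₂ y₂} (hx : x₁ = x₂) (hy : y₁ = y₂) :
    (some _ _ h₁ : (Ecurve m₀ m₁).Point) = some _ _ h₂ := by
  subst hx; subst hy; rfl

lemma some_ne {x₁ y₁ x₂ y₂ : ℚ} {h₁ : (Ecurve m₀ m₁).Nonsingular x₁ y₁}
    {h₂ : (Ecurve m₀ m₁).Nonsingular x₂ y₂} (h : x₁ ≠ x₂ ∨ y₁ ≠ y₂) :
    (some _ _ h₁ : (Ecurve m₀ m₁).Point) ≠ some _ _ h₂ := by
  intro he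
  rcases h with h | h
  · exact h (some.inj he).1
  · exact h (some.inj he).2

lemma Fset_eq (h₀ : 0 < m₀) (h₁ : 0 < m₁) :
    Fset m₀ m₁ = {0, some _ _ (nsP1 h₀ h₁), some _ _ (nsP2 h₀ h₁), some _ _ (nsP3 h₀ h₁),
      some _ _ (nsP4 h₀ h₁), some _ _ (nsP5 h₀ h₁), some _ _ (nsP6 h₀ h₁), some _ _ (nsP7 h₀ h₁)} := by
  ext P
  simp only [Fset, trivCoords, Set.mem_setOf_eq, List.mem_cons, List.not_mem_nil, or_false,
    Prod.mk.injEq, Set.mem_insert_iff, Set.mem_singleton_iff]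
  constructor
  · rintro (rfl | ⟨x, y, h, rfl, hc⟩)
    · exact Or.inl rfl
    · rcases hc with ⟨rfl, rfl⟩ | ⟨rfl, rfl⟩ | ⟨rfl, rfl⟩ | ⟨rfl, rfl⟩ | ⟨rfl, rfl⟩ | ⟨rfl, rfl⟩ |
        ⟨rfl, rfl⟩
      · exact Or.inr (Or.inl rfl)
      · exact Or.inr (Or.inr (Or.inl rfl))
      · exact Or.inr (Or.inr (Or.inr (Or.inl rfl)))
      · exact Or.inr (Or.inr (Or.inr (Or.inr (Or.inl rfl))))
      · exact Or.inr (Or.inr (Or.inr (Or.inr (Or.inr (Or.inl rfl)))))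
      · exact Or.inr (Or.inr (Or.inr (Or.inr (Or.inr (Or.inr (Or.inl rfl))))))
      · exact Or.inr (Or.inr (Or.inr (Or.inr (Or.inr (Or.inr (Or.inr rfl))))))
  · rintro (rfl | rfl | rfl | rfl | rfl | rfl | rfl | rfl)
    · exact Or.inl rfl
    · exact Or.inr ⟨_, _, nsP1 h₀ h₁, rfl, Or.inl ⟨rfl, rfl⟩⟩
    · exact Or.inr ⟨_, _, nsP2 h₀ h₁, rfl, Or.inr (Or.inl ⟨rfl, rfl⟩)⟩
    · exact Or.inr ⟨_, _, nsP3 h₀ h₁, rfl, Or.inr (Or.inr (Or.inl ⟨rfl, rfl⟩))⟩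
    · exact Or.inr ⟨_, _, nsP4 h₀ h₁, rfl, Or.inr (Or.inr (Or.inr (Or.inl ⟨rfl, rfl⟩)))⟩
    · exact Or.inr ⟨_, _, nsP5 h₀ h₁, rfl,
        Or.inr (Or.inr (Or.inr (Or.inr (Or.inl ⟨rfl, rfl⟩))))⟩
    · exact Or.inr ⟨_, _, nsP6 h₀ h₁, rfl,
        Or.inr (Or.inr (Or.inr (Or.inr (Or.inr (Or.inl ⟨rfl, rfl⟩)))))⟩
    · exact Or.inr ⟨_, _, nsP7 h₀ h₁, rfl,
        Or.inr (Or.inr (Or.inr (Or.inr (Or.inr (Or.inr ⟨rfl, rfl⟩)))))⟩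

lemma Fset_ncard (h₀ : 0 < m₀) (h₁ : 0 < m₁) : (Fset m₀ m₁).ncard = 8 := by
  have hP : (0:ℚ) < m₀ * m₁ := mul_pos h₀ h₁
  have hS : (0:ℚ) < m₀ + m₁ + 1 := by linarith
  rw [Fset_eq h₀ h₁]
  rw [Set.ncard_insert_of_notMem (by
    simp only [Set.mem_insert_iff, Set.mem_singleton_iff]
    push_neg
    exact ⟨Ne.symm (some_ne_zero _), Ne.symm (some_ne_zero _), Ne.symm (some_ne_zero _),
      Ne.symm (some_ne_zero _), Ne.symm (some_ne_zero _), Ne.symm (some_ne_zero _),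
      Ne.symm (some_ne_zero _)⟩)]
  rw [Set.ncard_insert_of_notMem (by
    simp only [Set.mem_insert_iff, Set.mem_singleton_iff]
    push_neg
    exact ⟨some_ne (Or.inl (ne_of_lt hP)), some_ne (Or.inl (ne_of_gt (by linarith))),
      some_ne (Or.inl (ne_of_gt (by linarith))), some_ne (Or.inl (ne_of_gt (by linarith))),
      some_ne (Or.inl (ne_of_lt (by nlinarith))), some_ne (Or.inl (ne_of_lt (by nlinarith)))⟩)]
  rw [Set.ncard_insert_of_notMem (by
    simp only [Set.mem_insert_iff, Set.mem_singleton_iff]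
    push_neg
    exact ⟨some_ne (Or.inl (ne_of_gt (by nlinarith))), some_ne (Or.inl (ne_of_gt (by nlinarith))),
      some_ne (Or.inl (ne_of_gt (by nlinarith))), some_ne (Or.inl (ne_of_lt (by nlinarith))),
      some_ne (Or.inl (ne_of_lt (by nlinarith)))⟩)]
  rw [Set.ncard_insert_of_notMem (by
    simp only [Set.mem_insert_iff, Set.mem_singleton_iff]
    push_neg
    exact ⟨some_ne (Or.inl (ne_of_lt (by linarith))), some_ne (Or.inl (ne_of_lt (by linarith))),
      some_ne (Or.inl (ne_of_lt (by nlinarith))), some_ne (Or.inl (ne_of_lt (by nlinarith)))⟩)]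
  rw [Set.ncard_insert_of_notMem (by
    simp only [Set.mem_insert_iff, Set.mem_singleton_iff]
    push_neg
    exact ⟨some_ne (Or.inr (ne_of_lt (by nlinarith))), some_ne (Or.inl (ne_of_lt (by nlinarith))),
      some_ne (Or.inl (ne_of_lt (by nlinarith)))⟩)]
  rw [Set.ncard_insert_of_notMem (by
    simp only [Set.mem_insert_iff, Set.mem_singleton_iff]
    push_neg
    exact ⟨some_ne (Or.inl (ne_of_lt (by nlinarith))), some_ne (Or.inl (ne_of_lt (by nlinarith)))⟩)]
  rw [Set.ncard_insert_of_notMem (by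
    simp only [Set.mem_singleton_iff]
    refine some_ne (Or.inr (ne_of_lt ?_))
    have h2 : (0:ℚ) < m₀ + 1 := by linarith
    have h3 : (0:ℚ) < m₁ + 1 := by linarith
    nlinarith [mul_pos (mul_pos h₀ h2) hS, mul_pos (mul_pos h₁ h3) hS]),
    Set.ncard_singleton]

lemma forward (h₀ : 0 < m₀) (h₁ : 0 < m₁) (H : AddSubgroup (Ecurve m₀ m₁).Point)
    (hH : (H : Set (Ecurve m₀ m₁).Point) = Fset m₀ m₁) : m₀ = m₁ := by
  have hmem : some _ _ (nsP4 h₀ h₁) ∈ H := by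
    rw [← SetLike.mem_coe, hH]
    exact Or.inr ⟨_, _, nsP4 h₀ h₁, rfl, by simp [trivCoords]⟩
  have hneg := neg_mem hmem
  rw [← SetLike.mem_coe, hH, neg_some] at hneg
  rcases hneg with h0 | ⟨x, y, h, he, hc⟩
  · exact absurd h0 (some_ne_zero _)
  · have hx : -m₁ = x := (some.inj he).1
    have hy : (Ecurve m₀ m₁).negY (-m₁) (-m₁ * (m₀ + 1)) = y := (some.inj he).2
    rw [negY_eq] at hy
    simp only [trivCoords, List.mem_cons, List.not_mem_nil, or_false, Prod.mk.injEq] at hc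
    rcases hc with ⟨hx', hy'⟩ | ⟨hx', hy'⟩ | ⟨hx', hy'⟩ | ⟨hx', hy'⟩ | ⟨hx', hy'⟩ | ⟨hx', hy'⟩ |
      ⟨hx', hy'⟩ <;> subst hx' <;> first
      | linarith [hx]
      | nlinarith [hx, mul_pos h₀ h₁]

section Backward

variable {m : ℚ}

lemma addX_eq (x₁ x₂ L : ℚ) :
    (Ecurve m₀ m₁).addX x₁ x₂ L = L ^ 2 - (m₀ + m₁ + 1 - m₀ * m₁) - x₁ - x₂ := by
  simp [WeierstrassCurve.Affine.addX]

lemma addY_eq (x₁ x₂ y₁ L : ℚ) :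
    (Ecurve m₀ m₁).addY x₁ x₂ y₁ L =
      -(L * ((Ecurve m₀ m₁).addX x₁ x₂ L - x₁) + y₁) := by
  simp [WeierstrassCurve.Affine.addY, WeierstrassCurve.Affine.negAddY, negY_eq]

variable (hm : 0 < m)

lemma e_T0 : (some _ _ (nsP1 hm hm) : (Ecurve m m).Point) + some _ _ (nsP1 hm hm) = 0 :=
  add_of_Y_eq rfl (by rw [negY_eq]; ring)

lemma e_T1 : (some _ _ (nsP2 hm hm) : (Ecurve m m).Point) + some _ _ (nsP2 hm hm) = 0 :=
  add_of_Y_eq rfl (by rw [negY_eq]; ring)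

lemma e_QQ : (some _ _ (nsP5 hm hm) : (Ecurve m m).Point) + some _ _ (nsP5 hm hm) =
    some _ _ (nsP2 hm hm) := by
  have hy : m * (m + 1) ≠ (Ecurve m m).negY (-m) (m * (m + 1)) := by
    rw [negY_eq]; nlinarith
  have hL : (Ecurve m m).slope (-m) (-m) (m * (m + 1)) (m * (m + 1)) = -1 := by
    rw [slope_of_Y_ne rfl hy, negY_eq]
    simp only [Ea₁, Ea₂, Ea₄]
    have hd : m * (m + 1) - -(m * (m + 1)) ≠ 0 := by nlinarith
    field_simp
    ring
  rw [add_of_Y_ne hy]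
  exact some_eq (by rw [addX_eq, hL]; ring) (by rw [addY_eq, addX_eq, hL]; ring)

lemma e_QT0 : (some _ _ (nsP5 hm hm) : (Ecurve m m).Point) + some _ _ (nsP1 hm hm) =
    some _ _ (nsP7 hm hm) := by
  have hx : -m ≠ (0 : ℚ) := by linarith
  have hL : (Ecurve m m).slope (-m) 0 (m * (m + 1)) 0 = -(m + 1) := by
    rw [slope_of_X_ne hx]
    field_simp
    ring
  rw [add_of_X_ne hx]
  exact some_eq (by rw [addX_eq, hL]; ring) (by rw [addY_eq, addX_eq, hL]; ring)

lemma e_T0T1 : (some _ _ (nsP1 hm hm) : (Ecurve m m).Point) + some _ _ (nsP2 hm hm) =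
    some _ _ (nsP3 hm hm) := by
  have hx : (0 : ℚ) ≠ m * m := by nlinarith
  have hL : (Ecurve m m).slope 0 (m * m) 0 0 = 0 := by
    rw [slope_of_X_ne hx]
    simp
  rw [add_of_X_ne hx]
  exact some_eq (by rw [addX_eq, hL]; ring) (by rw [addY_eq, addX_eq, hL]; ring)

lemma e_negQ : -(some _ _ (nsP5 hm hm) : (Ecurve m m).Point) = some _ _ (nsP4 hm hm) := by
  rw [neg_some]
  exact some_eq rfl (by rw [negY_eq]; ring)

lemma e_negR : -(some _ _ (nsP7 hm hm) : (Ecurve m m).Point) = some _ _ (nsP6 hm hm) := by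
  rw [neg_some]
  exact some_eq rfl (by rw [negY_eq]; ring)

noncomputable def g1 (hm : 0 < m) : ZMod 2 →+ (Ecurve m m).Point :=
  ZMod.lift 2 ⟨zmultiplesHom _ (some _ _ (nsP1 hm hm)), by
    rw [zmultiplesHom_apply]
    rw [show ((2 : ℕ) : ℤ) = (2 : ℤ) by norm_num, two_zsmul]
    exact e_T0 hm⟩

noncomputable def g2 (hm : 0 < m) : ZMod 4 →+ (Ecurve m m).Point :=
  ZMod.lift 4 ⟨zmultiplesHom _ (some _ _ (nsP5 hm hm)), by
    rw [zmultiplesHom_apply]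
    rw [show ((4 : ℕ) : ℤ) = (2 : ℤ) + 2 by norm_num, add_zsmul, two_zsmul, e_QQ hm, e_T1 hm]⟩

lemma g1_0 : g1 hm 0 = 0 := map_zero _

lemma g1_1 : g1 hm 1 = some _ _ (nsP1 hm hm) := by
  rw [show (1 : ZMod 2) = ((1 : ℤ) : ZMod 2) by norm_cast, g1, ZMod.lift_coe,
    zmultiplesHom_apply, one_zsmul]

lemma g2_0 : g2 hm 0 = 0 := map_zero _

lemma g2_1 : g2 hm 1 = some _ _ (nsP5 hm hm) := by
  rw [show (1 : ZMod 4) = ((1 : ℤ) : ZMod 4) by norm_cast, g2, ZMod.lift_coe,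
    zmultiplesHom_apply, one_zsmul]

lemma g2_2 : g2 hm 2 = some _ _ (nsP2 hm hm) := by
  rw [show (2 : ZMod 4) = ((2 : ℤ) : ZMod 4) by norm_cast, g2, ZMod.lift_coe,
    zmultiplesHom_apply, two_zsmul, e_QQ hm]

lemma g2_3 : g2 hm 3 = some _ _ (nsP4 hm hm) := by
  have h4 : ((4 : ℤ) : ZMod 4) = 0 := by norm_cast
  have : (3 : ZMod 4) = ((3 : ℤ) : ZMod 4) := by norm_cast
  rw [this, g2, ZMod.lift_coe, zmultiplesHom_apply]
  have h4Q : (4 : ℤ) • (some _ _ (nsP5 hm hm) : (Ecurve m m).Point) = 0 := by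
    rw [show (4 : ℤ) = 2 + 2 by norm_num, add_zsmul, two_zsmul, e_QQ hm, e_T1 hm]
  rw [show (3 : ℤ) = 4 - 1 by norm_num, sub_zsmul, h4Q, one_zsmul, zero_add]
  exact e_negQ hm

lemma backward (hm : 0 < m) : ∃ H : AddSubgroup (Ecurve m m).Point,
    (H : Set (Ecurve m m).Point) = Fset m m ∧ Nonempty (H ≃+ ZMod 2 × ZMod 4) := by
  obtain ⟨φ, hφ⟩ : ∃ φ : ZMod 2 × ZMod 4 →+ (Ecurve m m).Point,
      ∀ a b, φ (a, b) = g1 hm a + g2 hm b :=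
    ⟨(g1 hm).coprod (g2 hm), fun a b => AddMonoidHom.coprod_apply _ _ _⟩
  have hnegT0 : -(some _ _ (nsP1 hm hm) : (Ecurve m m).Point) = some _ _ (nsP1 hm hm) :=
    neg_eq_of_add_eq_zero_left (e_T0 hm)
  have t00 : φ (0, 0) = 0 := by rw [hφ, g1_0, g2_0, add_zero]
  have t01 : φ (0, 1) = some _ _ (nsP5 hm hm) := by rw [hφ, g1_0, g2_1, zero_add]
  have t02 : φ (0, 2) = some _ _ (nsP2 hm hm) := by rw [hφ, g1_0, g2_2, zero_add]
  have t03 : φ (0, 3) = some _ _ (nsP4 hm hm) := by rw [hφ, g1_0, g2_3, zero_add]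
  have t10 : φ (1, 0) = some _ _ (nsP1 hm hm) := by rw [hφ, g1_1, g2_0, add_zero]
  have t11 : φ (1, 1) = some _ _ (nsP7 hm hm) := by
    rw [hφ, g1_1, g2_1, add_comm, e_QT0 hm]
  have t12 : φ (1, 2) = some _ _ (nsP3 hm hm) := by rw [hφ, g1_1, g2_2, e_T0T1 hm]
  have t13 : φ (1, 3) = some _ _ (nsP6 hm hm) := by
    rw [hφ, g1_1, g2_3, ← e_negQ hm, ← e_negR hm, ← e_QT0 hm, neg_add, hnegT0, add_comm]
  have ha : ∀ a : ZMod 2, a = 0 ∨ a = 1 := by decide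
  have hb : ∀ b : ZMod 4, b = 0 ∨ b = 1 ∨ b = 2 ∨ b = 3 := by decide
  have hrange : (φ.range : Set (Ecurve m m).Point) = Fset m m := by
    rw [Fset_eq hm hm]
    ext P
    simp only [AddMonoidHom.coe_range, Set.mem_range, Set.mem_insert_iff, Set.mem_singleton_iff]
    constructor
    · rintro ⟨⟨a, b⟩, rfl⟩
      rcases ha a with rfl | rfl <;> rcases hb b with rfl | rfl | rfl | rfl <;>
        simp only [t00, t01, t02, t03, t10, t11, t12, t13] <;> tauto
    · rintro (rfl | rfl | rfl | rfl | rfl | rfl | rfl | rfl)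
      exacts [⟨(0, 0), t00⟩, ⟨(1, 0), t10⟩, ⟨(0, 2), t02⟩, ⟨(1, 2), t12⟩, ⟨(0, 3), t03⟩,
        ⟨(0, 1), t01⟩, ⟨(1, 3), t13⟩, ⟨(1, 1), t11⟩]
  have hinj : Function.Injective φ := by
    rw [injective_iff_map_eq_zero]
    rintro ⟨a, b⟩ hab
    rcases ha a with rfl | rfl <;> rcases hb b with rfl | rfl | rfl | rfl
    · rfl
    · rw [t01] at hab; exact absurd hab (some_ne_zero _)
    · rw [t02] at hab; exact absurd hab (some_ne_zero _)
    · rw [t03] at hab; exact absurd hab (some_ne_zero _)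
    · rw [t10] at hab; exact absurd hab (some_ne_zero _)
    · rw [t11] at hab; exact absurd hab (some_ne_zero _)
    · rw [t12] at hab; exact absurd hab (some_ne_zero _)
    · rw [t13] at hab; exact absurd hab (some_ne_zero _)
  exact ⟨φ.range, hrange, ⟨(AddMonoidHom.ofInjective hinj).symm⟩⟩

end Backward

end TrivialPoints

/-- For positive rationals `m₀, m₁`, the eight trivial points lie on the elliptic curve
`y² = x * (x - m₀ * m₁) * (x + m₀ + m₁ + 1)`, they are eight distinct points, and they form
a subgroup of the Mordell–Weil group if and only if `m₀ = m₁`, in which case this subgroup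
is isomorphic to `ℤ/2ℤ × ℤ/4ℤ`. -/
theorem trivial_points_subgroup_iff_symmetric (m₀ m₁ : ℚ) (h₀ : 0 < m₀) (h₁ : 0 < m₁) :
    (∀ p ∈ trivCoords m₀ m₁, (Ecurve m₀ m₁).Nonsingular p.1 p.2) ∧
    (Fset m₀ m₁).ncard = 8 ∧
    ((∃ H : AddSubgroup (Ecurve m₀ m₁).Point, (H : Set (Ecurve m₀ m₁).Point) = Fset m₀ m₁)
      ↔ m₀ = m₁) ∧
    (m₀ = m₁ → ∃ H : AddSubgroup (Ecurve m₀ m₁).Point,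
      (H : Set (Ecurve m₀ m₁).Point) = Fset m₀ m₁ ∧
        Nonempty (H ≃+ ZMod 2 × ZMod 4)) := by
  refine ⟨TrivialPoints.ns_all h₀ h₁, TrivialPoints.Fset_ncard h₀ h₁, ⟨?_, ?_⟩, ?_⟩
  · rintro ⟨H, hH⟩
    exact TrivialPoints.forward h₀ h₁ H hH
  · rintro rfl
    obtain ⟨H, h1, -⟩ := TrivialPoints.backward h₀
    exact ⟨H, h1⟩
  · rintro rfl
    exact TrivialPoints.backward h₀
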